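/- For every continuous function f on the circle 𝕋, the Cesàro means of the partial sums of the Fourier series of f converge uniformly to f on 𝕋 (Fejér's theorem). -/

import Mathlib

open MeasureTheory AddCircle Filter

instance : Fact ((0:ℝ) < 1) := ⟨one_pos⟩

namespace FejerAux

local notation "𝕋" => AddCircle (1:ℝ)
local notation "μ" => (haarAddCircle : Measure (AddCircle (1:ℝ)))

lemma cont_integrable {g : 𝕋 → ℂ} (hg : Continuous g) : Integrable g μ :=
  hg.integrable_of_hasCompactSupport (HasCompactSupport.of_compactSpace g)

lemma fourier_apply_add (n : ℤ) (x y : 𝕋) :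
    fourier n (x + y) = fourier n x * fourier n y := by
  simp_rw [fourier_apply, smul_add, toCircle_add, Circle.coe_mul]

lemma fourier_apply_sub (n : ℤ) (x y : 𝕋) :
    fourier n (x - y) = fourier n x * fourier (-n) y := by
  rw [show x - y = x + (-y) from sub_eq_add_neg x y, fourier_apply_add]
  congr 1
  simp_rw [fourier_apply, smul_neg, neg_smul]

lemma integral_fourier (m : ℤ) :
    ∫ t : 𝕋, fourier m t ∂μ = if m = 0 then 1 else 0 := by
  split_ifs with h
  · simp [h, fourier_zero]
  · exact integral_eq_zero_of_add_right_eq_neg (fourier_add_half_inv_index h one_pos)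

lemma fourierCoeff_fourier' (i m : ℤ) :
    fourierCoeff (⇑(fourier i : C(𝕋,ℂ))) m = if m = i then 1 else 0 := by
  rw [fourierCoeff]
  simp_rw [smul_eq_mul, ← fourier_add]
  rw [integral_fourier]
  congr 1
  simp [eq_comm, neg_add_eq_zero]

lemma sum_cesaro_eq {M : Type*} [AddCommMonoid M] (N : ℕ) (g : ℤ → M) :
    ∑ n ∈ Finset.range (N+1), ∑ m ∈ Finset.Icc (-(n:ℤ)) (n:ℤ), g m
      = ∑ j ∈ Finset.range (N+1), ∑ k ∈ Finset.range (N+1), g ((j:ℤ) - (k:ℤ)) := by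
  rw [Finset.sum_sigma' (Finset.range (N+1)) (fun n => Finset.Icc (-(n:ℤ)) (n:ℤ)) (fun _ m => g m),
    ← Finset.sum_product' (s := Finset.range (N+1)) (t := Finset.range (N+1))
      (f := fun j k => g ((j:ℤ) - (k:ℤ)))]
  refine Finset.sum_nbij' (fun x => (((x.1:ℤ) + min x.2 0).toNat, ((x.1:ℤ) - max x.2 0).toNat))
    (fun y => ⟨max y.1 y.2, (y.1:ℤ) - (y.2:ℤ)⟩) ?_ ?_ ?_ ?_ ?_
  · rintro ⟨n, m⟩ h
    simp only [Finset.mem_sigma, Finset.mem_range, Finset.mem_Icc] at h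
    simp only [Finset.mem_product, Finset.mem_range]
    omega
  · rintro ⟨j, k⟩ h
    simp only [Finset.mem_product, Finset.mem_range] at h
    simp only [Finset.mem_sigma, Finset.mem_range, Finset.mem_Icc]
    omega
  · rintro ⟨n, m⟩ h
    simp only [Finset.mem_sigma, Finset.mem_range, Finset.mem_Icc] at h
    dsimp only
    ext <;> simp <;> omega
  · rintro ⟨j, k⟩ h
    simp only [Finset.mem_product, Finset.mem_range] at h
    dsimp only
    simp only [Prod.mk.injEq]
    constructor <;> omega
  · rintro ⟨n, m⟩ h
    simp only [Finset.mem_sigma, Finset.mem_range, Finset.mem_Icc] at h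
    dsimp only
    congr 1
    omega

/-- The Fejér kernel (as a complex-valued function). -/
noncomputable def K (N : ℕ) (z : 𝕋) : ℂ :=
  ((N:ℂ) + 1)⁻¹ * ∑ n ∈ Finset.range (N+1), ∑ m ∈ Finset.Icc (-(n:ℤ)) (n:ℤ), fourier m z

lemma K_eq (N : ℕ) (z : 𝕋) :
    K N z = ((((N:ℝ) + 1)⁻¹ *
      Complex.normSq (∑ k ∈ Finset.range (N+1), fourier (k:ℤ) z) : ℝ) : ℂ) := by
  rw [K, sum_cesaro_eq N (fun m => fourier m z)]
  have : ∀ j k : ℕ, fourier ((j:ℤ) - (k:ℤ)) z = fourier (j:ℤ) z * fourier (-(k:ℤ)) z := by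
    intro j k
    rw [sub_eq_add_neg, fourier_add]
  simp_rw [this]
  rw [← Finset.sum_mul_sum]
  simp_rw [fourier_neg]
  rw [← map_sum (starRingEnd ℂ), Complex.mul_conj]
  push_cast
  ring

lemma K_continuous (N : ℕ) : Continuous (K N) := by
  unfold K
  exact continuous_const.mul (continuous_finset_sum _ fun n _ =>
    continuous_finset_sum _ fun m _ => (fourier m).continuous)

lemma norm_K (N : ℕ) (z : 𝕋) :
    ‖K N z‖ = ((N:ℝ) + 1)⁻¹ * Complex.normSq (∑ k ∈ Finset.range (N+1), fourier (k:ℤ) z) := by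
  rw [K_eq, Complex.norm_real,
    Real.norm_of_nonneg (mul_nonneg (by positivity) (Complex.normSq_nonneg _))]

lemma integral_K (N : ℕ) : ∫ z, K N z ∂μ = 1 := by
  unfold K
  rw [integral_const_mul, integral_finset_sum _ (fun n _ =>
    integrable_finset_sum _ (fun m _ => cont_integrable (fourier m).continuous))]
  have : ∀ n ∈ Finset.range (N+1),
      ∫ z, (∑ m ∈ Finset.Icc (-(n:ℤ)) (n:ℤ), fourier m z) ∂μ = 1 := by
    intro n _
    rw [integral_finset_sum _ (fun m _ => cont_integrable (fourier m).continuous)]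
    simp_rw [integral_fourier]
    rw [Finset.sum_ite_eq' (Finset.Icc (-(n:ℤ)) (n:ℤ)) (0:ℤ) (fun _ => (1:ℂ))]
    simp
  rw [Finset.sum_congr rfl this, Finset.sum_const, Finset.card_range, nsmul_eq_mul, mul_one]
  push_cast
  rw [inv_mul_cancel₀ (Nat.cast_add_one_ne_zero N)]

lemma integral_norm_K (N : ℕ) : ∫ z, ‖K N z‖ ∂μ = 1 := by
  have h1 : ∫ z, ((‖K N z‖ : ℝ) : ℂ) ∂μ = 1 := by
    have : ∀ z, ((‖K N z‖ : ℝ) : ℂ) = K N z := by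
      intro z
      rw [norm_K, K_eq]
    simp_rw [this]
    exact integral_K N
  have h2 : ((∫ z, ‖K N z‖ ∂μ : ℝ) : ℂ) = 1 :=
    (integral_ofReal (𝕜 := ℂ) (f := fun z => ‖K N z‖)).symm.trans h1
  exact_mod_cast h2

/-- The Cesàro mean operator applied to `f`, as a continuous map. -/
noncomputable def ces (N : ℕ) (f : C(𝕋, ℂ)) : C(𝕋, ℂ) :=
  ((N:ℂ) + 1)⁻¹ •
    (∑ n ∈ Finset.range (N + 1),
      ∑ m ∈ Finset.Icc (-(n:ℤ)) (n:ℤ), fourierCoeff (⇑f) m • (fourier m : C(𝕋, ℂ)))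

lemma ces_apply (N : ℕ) (f : C(𝕋, ℂ)) (x : 𝕋) :
    ces N f x = ∫ y, K N (x - y) * f y ∂μ := by
  have hint : ∀ m : ℤ, Integrable (fun y => fourier m (x - y) * f y) μ :=
    fun m => cont_integrable (((fourier m).continuous.comp
      (continuous_const.sub continuous_id)).mul f.continuous)
  have key : ∀ m : ℤ, fourierCoeff (⇑f) m * fourier m x
      = ∫ y, fourier m (x - y) * f y ∂μ := by
    intro m
    rw [fourierCoeff, ← integral_mul_const]
    congr 1
    ext y
    rw [fourier_apply_sub]
    simp only [smul_eq_mul]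
    ring
  rw [ces]
  simp only [ContinuousMap.smul_apply, ContinuousMap.sum_apply, ContinuousMap.smul_apply,
    smul_eq_mul]
  simp_rw [key]
  have swap : ∑ n ∈ Finset.range (N+1), ∑ m ∈ Finset.Icc (-(n:ℤ)) (n:ℤ),
        ∫ y, fourier m (x - y) * f y ∂μ
      = ∫ y, ∑ n ∈ Finset.range (N+1), ∑ m ∈ Finset.Icc (-(n:ℤ)) (n:ℤ),
        fourier m (x - y) * f y ∂μ := by
    rw [integral_finset_sum _ (fun n _ => integrable_finset_sum _ (fun m _ => hint m))]
    exact Finset.sum_congr rfl fun n _ => (integral_finset_sum _ (fun m _ => hint m)).symm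
  rw [swap, ← integral_const_mul]
  congr 1
  ext y
  simp only [K, Finset.sum_mul, mul_assoc]

lemma norm_ces_le (N : ℕ) (f : C(𝕋, ℂ)) : ‖ces N f‖ ≤ ‖f‖ := by
  rw [ContinuousMap.norm_le _ (norm_nonneg f)]
  intro x
  rw [ces_apply]
  calc ‖∫ y, K N (x - y) * f y ∂μ‖ ≤ ∫ y, ‖K N (x - y) * f y‖ ∂μ :=
        norm_integral_le_integral_norm _
    _ ≤ ∫ y, ‖K N (x - y)‖ * ‖f‖ ∂μ := by
        refine integral_mono ?_ ?_ ?_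
        · exact (cont_integrable (((K_continuous N).comp
            (continuous_const.sub continuous_id)).mul f.continuous)).norm
        · exact ((cont_integrable ((K_continuous N).comp
            (continuous_const.sub continuous_id))).norm).mul_const _
        · intro y
          dsimp only
          rw [norm_mul]
          exact mul_le_mul_of_nonneg_left (f.norm_coe_le_norm y) (norm_nonneg _)
    _ = (∫ y, ‖K N (x - y)‖ ∂μ) * ‖f‖ := integral_mul_const _ _
    _ = (∫ y, ‖K N y‖ ∂μ) * ‖f‖ := by
        rw [integral_sub_left_eq_self (fun y => ‖K N y‖) μ x]
    _ = ‖f‖ := by rw [integral_norm_K]; ring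

lemma ces_add (N : ℕ) (f g : C(𝕋, ℂ)) : ces N (f + g) = ces N f + ces N g := by
  have hc : ∀ m : ℤ, fourierCoeff (⇑(f+g)) m = fourierCoeff (⇑f) m + fourierCoeff (⇑g) m := by
    intro m
    simp only [fourierCoeff, ContinuousMap.coe_add, Pi.add_apply, smul_add]
    exact integral_add
      (cont_integrable ((fourier (-m)).continuous.smul f.continuous))
      (cont_integrable ((fourier (-m)).continuous.smul g.continuous))
  simp_rw [ces, hc, add_smul, Finset.sum_add_distrib, smul_add]

lemma ces_smul (N : ℕ) (c : ℂ) (f : C(𝕋, ℂ)) : ces N (c • f) = c • ces N f := by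
  have hc : ∀ m : ℤ, fourierCoeff (⇑(c • f)) m = c * fourierCoeff (⇑f) m := by
    intro m
    rw [show ⇑(c • f) = c • ⇑f from rfl, fourierCoeff.const_smul]
    rfl
  simp_rw [ces, hc, mul_smul, ← Finset.smul_sum, smul_comm c]

lemma ces_fourier (N : ℕ) (i : ℤ) (hN : i.natAbs ≤ N) :
    ces N (fourier i) - fourier i = ((((N + 1 - i.natAbs : ℕ) : ℂ)/((N:ℂ)+1)) - 1) • fourier i := by
  rw [ces]
  simp_rw [fourierCoeff_fourier']
  have h1 : ∀ n : ℕ, ∑ m ∈ Finset.Icc (-(n:ℤ)) (n:ℤ),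
      (if m = i then (1:ℂ) else 0) • (fourier m : C(𝕋,ℂ))
      = if i.natAbs ≤ n then (fourier i : C(𝕋,ℂ)) else 0 := by
    intro n
    simp_rw [ite_smul, one_smul, zero_smul]
    rw [Finset.sum_ite_eq' (Finset.Icc (-(n:ℤ)) (n:ℤ)) i (fun m => (fourier m : C(𝕋,ℂ)))]
    congr 1
    simp only [Finset.mem_Icc, eq_iff_iff]
    omega
  simp_rw [h1]
  have h2 : ∑ n ∈ Finset.range (N+1), (if i.natAbs ≤ n then (fourier i : C(𝕋,ℂ)) else 0)
      = ((N + 1 - i.natAbs : ℕ) : ℂ) • (fourier i : C(𝕋,ℂ)) := by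
    have hf : (Finset.range (N+1)).filter (fun n => i.natAbs ≤ n)
        = Finset.Ico i.natAbs (N+1) := by
      ext n; simp [Finset.mem_filter, Finset.mem_Ico]; omega
    rw [← Finset.sum_filter, hf, Finset.sum_const, Nat.card_Ico,
      Nat.cast_smul_eq_nsmul ℂ]
  rw [h2, smul_smul, sub_smul, one_smul]
  congr 1
  field_simp

lemma ces_zero (N : ℕ) : ces N 0 = 0 := by
  have := ces_smul N 0 0
  simpa using this

lemma ces_sub (N : ℕ) (f g : C(𝕋, ℂ)) : ces N (f - g) = ces N f - ces N g := by
  have h1 : f - g + g = f := sub_add_cancel f g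
  have := ces_add N (f - g) g
  rw [h1] at this
  rw [eq_sub_iff_add_eq, this]

lemma tendsto_ces_fourier (i : ℤ) :
    Tendsto (fun N => ces N (fourier i)) atTop (nhds (fourier i)) := by
  rw [tendsto_iff_norm_sub_tendsto_zero]
  apply squeeze_zero' (Eventually.of_forall fun N => norm_nonneg _)
    (g := fun N : ℕ => (i.natAbs : ℝ) / ((N:ℝ) + 1))
  · filter_upwards [eventually_ge_atTop i.natAbs] with N hN
    rw [ces_fourier N i hN, norm_smul, fourier_norm, mul_one]
    have hcast : ((N + 1 - i.natAbs : ℕ) : ℂ) = (N:ℂ) + 1 - (i.natAbs : ℂ) := by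
      push_cast [Nat.cast_sub (by omega : i.natAbs ≤ N + 1)]
      ring
    have hne : ((N:ℂ) + 1) ≠ 0 := Nat.cast_add_one_ne_zero N
    have : ((N + 1 - i.natAbs : ℕ) : ℂ) / ((N:ℂ) + 1) - 1 = -(i.natAbs : ℂ) / ((N:ℂ) + 1) := by
      rw [hcast]
      field_simp
      ring
    rw [this]
    rw [norm_div]
    simp only [norm_neg]
    have h1 : ‖((i.natAbs : ℂ))‖ = (i.natAbs : ℝ) := by
      rw [Complex.norm_natCast]
    have h2 : ‖((N:ℂ) + 1)‖ = (N:ℝ) + 1 := by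
      rw [show ((N:ℂ) + 1) = (((N + 1 : ℕ) : ℝ) : ℂ) by push_cast; ring, Complex.norm_real,
        Real.norm_of_nonneg (by positivity)]
      push_cast; ring
    rw [h1, h2]
  · have h := (tendsto_const_div_atTop_nhds_zero_nat (i.natAbs : ℝ)).comp
      (tendsto_add_atTop_nat 1)
    have heq : (fun N : ℕ => (i.natAbs:ℝ)/((N:ℝ)+1))
        = (fun n : ℕ => (i.natAbs:ℝ)/(n:ℝ)) ∘ (fun a : ℕ => a + 1) := by
      ext N
      simp only [Function.comp_apply]
      push_cast
      ring
    rw [heq]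
    exact h

lemma tendsto_ces_span (g : C(𝕋, ℂ))
    (hg : g ∈ Submodule.span ℂ (Set.range (fourier (T := (1:ℝ))))) :
    Tendsto (fun N => ces N g) atTop (nhds g) := by
  induction hg using Submodule.span_induction with
  | mem x hx =>
    obtain ⟨i, rfl⟩ := hx
    exact tendsto_ces_fourier i
  | zero => simpa [ces_zero] using (tendsto_const_nhds : Tendsto (fun _ : ℕ => (0:C(𝕋,ℂ))) atTop _)
  | add x y _ _ hx hy =>
    simpa [ces_add] using hx.add hy
  | smul c x _ hx =>
    simpa [ces_smul] using hx.const_smul c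

lemma tendsto_ces (f : C(𝕋, ℂ)) : Tendsto (fun N => ces N f) atTop (nhds f) := by
  rw [Metric.tendsto_atTop]
  intro ε hε
  have hf : f ∈ closure ((Submodule.span ℂ (Set.range (fourier (T := (1:ℝ))))) : Set C(𝕋,ℂ)) := by
    have h := span_fourier_closure_eq_top (T := (1:ℝ))
    rw [← Submodule.topologicalClosure_coe]
    rw [h]
    trivial
  obtain ⟨g, hg_mem, hg_dist⟩ := Metric.mem_closure_iff.mp hf (ε/3) (by positivity)
  obtain ⟨N₀, hN₀⟩ := (Metric.tendsto_atTop.mp (tendsto_ces_span g hg_mem)) (ε/3) (by positivity)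
  refine ⟨N₀, fun N hN => ?_⟩
  have h1 : ‖ces N f - ces N g‖ ≤ ‖f - g‖ := by
    rw [← ces_sub]
    exact norm_ces_le N (f - g)
  have h2 := hN₀ N hN
  rw [dist_eq_norm] at *
  calc ‖ces N f - f‖ = ‖(ces N f - ces N g) + (ces N g - g) + (g - f)‖ := by ring_nf
    _ ≤ ‖ces N f - ces N g‖ + ‖ces N g - g‖ + ‖g - f‖ := norm_add₃_le
    _ < ε/3 + ε/3 + ε/3 := by
        have h3 : ‖g - f‖ < ε/3 := by rw [norm_sub_rev]; exact hg_dist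
        have h4 : ‖ces N f - ces N g‖ < ε / 3 := lt_of_le_of_lt h1 hg_dist
        linarith
    _ = ε := by ring

end FejerAux

open FejerAux in
/-- Fejér's theorem: the Cesàro means of the partial sums of the Fourier series of a
continuous function on the circle converge uniformly to the function. -/
theorem fejer (f : C(AddCircle (1:ℝ), ℂ)) :
    Tendsto
      (fun N : ℕ =>
        ‖((N:ℂ) + 1)⁻¹ •
            (∑ n ∈ Finset.range (N + 1),
              ∑ m ∈ Finset.Icc (-(n:ℤ)) (n:ℤ), fourierCoeff (⇑f) m • (fourier m : C(AddCircle (1:ℝ), ℂ)))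
          - f‖)
      atTop (nhds 0) := by
  have h := tendsto_iff_norm_sub_tendsto_zero.mp (tendsto_ces f)
  simpa [ces] using h
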